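/- If β | φ ~ N(0, φ²) and φ ~ Cauchy⁺(0,1), then the marginal density of β satisfies p(β) ~ C/β² as |β| → ∞ for some constant C > 0; in particular p has heavier tails than any Gaussian. -/

import Mathlib

open Filter Topology MeasureTheory

noncomputable def hsF (β : ℝ) : ℝ :=
  ∫ φ in Set.Ioi (0 : ℝ),
    (1 / (φ * Real.sqrt (2 * Real.pi))) * Real.exp (-β ^ 2 / (2 * φ ^ 2))
      * (2 / (Real.pi * (1 + φ ^ 2)))

noncomputable def hsH (b ψ : ℝ) : ℝ :=
  (1 / (ψ * Real.sqrt (2 * Real.pi))) * Real.exp (-1 / (2 * ψ ^ 2))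
    * (2 * b ^ 2 / (Real.pi * (1 + b ^ 2 * ψ ^ 2)))

noncomputable def hsG (ψ : ℝ) : ℝ :=
  (1 / (ψ * Real.sqrt (2 * Real.pi))) * Real.exp (-1 / (2 * ψ ^ 2)) * (2 / (Real.pi * ψ ^ 2))

lemma hsG_meas : Measurable hsG := by unfold hsG; measurability

lemma hsH_meas (b : ℝ) : Measurable (hsH b) := by unfold hsH; measurability

lemma hsG_pos {ψ : ℝ} (hψ : 0 < ψ) : 0 < hsG ψ := by
  have hsp : (0:ℝ) < Real.sqrt (2 * Real.pi) := Real.sqrt_pos.mpr (by positivity)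
  have hπ := Real.pi_pos
  unfold hsG; positivity

lemma hsH_le (b ψ : ℝ) (hψ : 0 < ψ) : |hsH b ψ| ≤ hsG ψ := by
  unfold hsH hsG
  have hsp : (0:ℝ) < Real.sqrt (2 * Real.pi) := Real.sqrt_pos.mpr (by positivity)
  have hπ := Real.pi_pos
  have h1 : 0 ≤ (1 / (ψ * Real.sqrt (2 * Real.pi))) * Real.exp (-1 / (2 * ψ ^ 2)) := by
    positivity
  rw [abs_of_nonneg (by positivity)]
  refine mul_le_mul_of_nonneg_left ?_ h1
  rw [div_le_div_iff₀ (by positivity) (by positivity)]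
  nlinarith [sq_nonneg b, sq_nonneg ψ, sq_nonneg (b*ψ), Real.pi_pos]

lemma exp_neg_le {y : ℝ} (hy : 0 < y) : Real.exp (-y) ≤ 4 / y ^ 2 := by
  have h1 : y / 2 + 1 ≤ Real.exp (y / 2) := Real.add_one_le_exp _
  have h3 := mul_le_mul h1 h1 (by linarith) (Real.exp_pos _).le
  rw [← Real.exp_add, add_halves] at h3
  have h2 : y ^ 2 / 4 ≤ Real.exp y := by nlinarith
  have h4 : (0:ℝ) < y ^ 2 / 4 := by positivity
  rw [Real.exp_neg]
  calc (Real.exp y)⁻¹ ≤ (y ^ 2 / 4)⁻¹ := inv_anti₀ h4 h2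
    _ = 4 / y ^ 2 := by field_simp

lemma sqrt2pi_ge_one : (1:ℝ) ≤ Real.sqrt (2 * Real.pi) := by
  rw [show (1:ℝ) = Real.sqrt 1 by simp]
  exact Real.sqrt_le_sqrt (by nlinarith [Real.pi_gt_three])

lemma hsG_bdd {ψ : ℝ} (hψ : ψ ∈ Set.Ioc (0:ℝ) 1) : ‖hsG ψ‖ ≤ 32 := by
  obtain ⟨h0, h1⟩ := hψ
  have he : Real.exp (-1 / (2 * ψ ^ 2)) ≤ 16 * ψ ^ 4 := by
    rw [neg_div]
    calc Real.exp (-(1 / (2 * ψ ^ 2))) ≤ 4 / (1 / (2 * ψ ^ 2)) ^ 2 :=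
        exp_neg_le (by positivity)
      _ = 16 * ψ ^ 4 := by field_simp; ring
  have hs := sqrt2pi_ge_one
  have hsp : (0:ℝ) < Real.sqrt (2 * Real.pi) := by linarith
  have hπ := Real.pi_gt_three
  rw [Real.norm_eq_abs, abs_of_nonneg (hsG_pos h0).le]
  unfold hsG
  calc (1 / (ψ * Real.sqrt (2 * Real.pi))) * Real.exp (-1 / (2 * ψ ^ 2)) * (2 / (Real.pi * ψ ^ 2))
      ≤ (1 / (ψ * 1)) * (16 * ψ ^ 4) * (2 / (3 * ψ ^ 2)) := by
        gcongr <;> first | positivity | linarith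
    _ = 32 / 3 * ψ := by field_simp; ring
    _ ≤ 32 := by nlinarith

lemma hsG_int : IntegrableOn hsG (Set.Ioi 0) := by
  have h1 : IntegrableOn hsG (Set.Ioc 0 1) := by
    apply Measure.integrableOn_of_bounded (M := 32) (by simp)
      hsG_meas.aestronglyMeasurable
    filter_upwards [ae_restrict_mem measurableSet_Ioc] with ψ hψ using hsG_bdd hψ
  have h2 : IntegrableOn hsG (Set.Ioi 1) := by
    have hint : IntegrableOn
        (fun ψ : ℝ => (2 / (Real.pi * Real.sqrt (2 * Real.pi))) * ψ ^ (-3 : ℝ)) (Set.Ioi 1) :=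
      (integrableOn_Ioi_rpow_of_lt (by norm_num) one_pos).const_mul _
    refine hint.mono' hsG_meas.aestronglyMeasurable ?_
    filter_upwards [ae_restrict_mem measurableSet_Ioi] with ψ hψ
    have h0 : (0:ℝ) < ψ := lt_trans one_pos hψ
    have hsp : (0:ℝ) < Real.sqrt (2 * Real.pi) := Real.sqrt_pos.mpr (by positivity)
    have hee : Real.exp (-1 / (2 * ψ ^ 2)) ≤ 1 := by
      rw [Real.exp_le_one_iff, neg_div]
      have : (0:ℝ) ≤ 1 / (2 * ψ ^ 2) := by positivity
      linarith
    rw [Real.norm_eq_abs, abs_of_nonneg (hsG_pos h0).le]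
    unfold hsG
    rw [Real.rpow_neg h0.le, show (3:ℝ) = ((3:ℕ):ℝ) by norm_num, Real.rpow_natCast]
    calc (1 / (ψ * Real.sqrt (2 * Real.pi))) * Real.exp (-1 / (2 * ψ ^ 2)) * (2 / (Real.pi * ψ ^ 2))
        ≤ (1 / (ψ * Real.sqrt (2 * Real.pi))) * 1 * (2 / (Real.pi * ψ ^ 2)) := by
          gcongr <;> positivity
      _ = 2 / (Real.pi * Real.sqrt (2 * Real.pi)) * (ψ ^ 3)⁻¹ := by
          field_simp
  have h3 := h1.union h2
  rwa [Set.Ioc_union_Ioi_eq_Ioi zero_le_one] at h3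

lemma lemA {b : ℝ} (hb : 0 < b) : hsF b * b ^ 2 = ∫ ψ in Set.Ioi (0:ℝ), hsH b ψ := by
  have key := integral_comp_mul_left_Ioi
    (fun φ => (1 / (φ * Real.sqrt (2 * Real.pi))) * Real.exp (-b ^ 2 / (2 * φ ^ 2))
      * (2 / (Real.pi * (1 + φ ^ 2)))) 0 hb
  rw [mul_zero, smul_eq_mul] at key
  beta_reduce at key
  have key2 : hsF b = b * ∫ x in Set.Ioi (0:ℝ),
      (1 / ((b * x) * Real.sqrt (2 * Real.pi))) * Real.exp (-b ^ 2 / (2 * (b * x) ^ 2))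
        * (2 / (Real.pi * (1 + (b * x) ^ 2))) := by
    unfold hsF
    rw [key]
    field_simp
    congr 1; funext x; rw [mul_comm (x ^ 2) 2]; ring
  rw [key2]
  have key3 : (b * ∫ x in Set.Ioi (0:ℝ),
      (1 / ((b * x) * Real.sqrt (2 * Real.pi))) * Real.exp (-b ^ 2 / (2 * (b * x) ^ 2))
        * (2 / (Real.pi * (1 + (b * x) ^ 2)))) * b ^ 2
      = ∫ x in Set.Ioi (0:ℝ), b ^ 3 *
          ((1 / ((b * x) * Real.sqrt (2 * Real.pi))) * Real.exp (-b ^ 2 / (2 * (b * x) ^ 2))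
            * (2 / (Real.pi * (1 + (b * x) ^ 2)))) := by
    rw [integral_const_mul]; ring
  rw [key3]
  refine setIntegral_congr_fun measurableSet_Ioi fun ψ hψ => ?_
  have hψ0 : (0:ℝ) < ψ := hψ
  unfold hsH
  have h1 : -b ^ 2 / (2 * (b * ψ) ^ 2) = -1 / (2 * ψ ^ 2) := by
    rw [div_eq_div_iff (by positivity) (by positivity)]
    ring
  rw [h1]
  have hπ := Real.pi_pos
  have hsp : (0:ℝ) < Real.sqrt (2 * Real.pi) := Real.sqrt_pos.mpr (by positivity)
  field_simp

lemma lemB : Tendsto (fun b => ∫ ψ in Set.Ioi (0:ℝ), hsH b ψ) atTop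
    (𝓝 (∫ ψ in Set.Ioi (0:ℝ), hsG ψ)) := by
  refine tendsto_integral_filter_of_dominated_convergence hsG
    (Eventually.of_forall fun b => (hsH_meas b).aestronglyMeasurable) ?_ hsG_int ?_
  · refine Eventually.of_forall fun b => ?_
    filter_upwards [ae_restrict_mem measurableSet_Ioi] with ψ hψ
    rw [Real.norm_eq_abs]
    exact hsH_le b ψ hψ
  · filter_upwards [ae_restrict_mem measurableSet_Ioi] with ψ hψ
    have hψ0 : (0:ℝ) < ψ := hψ
    have hπ := Real.pi_pos
    set c := (1 / (ψ * Real.sqrt (2 * Real.pi))) * Real.exp (-1 / (2 * ψ ^ 2)) with hc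
    have h1 : Tendsto (fun b : ℝ => (b ^ 2)⁻¹) atTop (𝓝 0) :=
      (tendsto_pow_atTop two_ne_zero).inv_tendsto_atTop
    have h2 : Tendsto (fun b : ℝ => c * (2 / (Real.pi * ((b ^ 2)⁻¹ + ψ ^ 2)))) atTop
        (𝓝 (c * (2 / (Real.pi * (0 + ψ ^ 2))))) := by
      exact tendsto_const_nhds.mul (tendsto_const_nhds.div
        (tendsto_const_nhds.mul (h1.add tendsto_const_nhds)) (by positivity))
    have h3 : c * (2 / (Real.pi * (0 + ψ ^ 2))) = hsG ψ := by
      unfold hsG; rw [hc, zero_add]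
    rw [h3] at h2
    refine h2.congr' ?_
    filter_upwards [eventually_gt_atTop (0:ℝ)] with b hb
    unfold hsH
    rw [hc]
    congr 1
    rw [div_eq_div_iff (by positivity) (by positivity)]
    field_simp

lemma hsC_pos : 0 < ∫ ψ in Set.Ioi (0:ℝ), hsG ψ := by
  rw [setIntegral_pos_iff_support_of_nonneg_ae ?_ hsG_int]
  · refine lt_of_lt_of_le ?_ (measure_mono (?_ : Set.Ioc (0:ℝ) 1 ⊆ _))
    · rw [Real.volume_Ioc]
      norm_num
    · intro ψ hψ
      exact ⟨(hsG_pos hψ.1).ne', hψ.1⟩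
  · filter_upwards [ae_restrict_mem measurableSet_Ioi] with ψ hψ using (hsG_pos hψ).le

/-- If `β | φ ~ N(0, φ²)` and `φ ~ Cauchy⁺(0,1)`, the marginal horseshoe density
`p(β) = ∫₀^∞ (φ√(2π))⁻¹ exp(−β²/(2φ²)) · 2/(π(1+φ²)) dφ` satisfies `p(β) ~ C/β²` as
`|β| → ∞` for some `C > 0`; in particular `p` has heavier tails than any Gaussian. -/
theorem stmt_10 :
    ∃ C > (0 : ℝ),
      Tendsto
        (fun β : ℝ =>
          (∫ φ in Set.Ioi (0 : ℝ),
            (1 / (φ * Real.sqrt (2 * Real.pi))) * Real.exp (-β ^ 2 / (2 * φ ^ 2))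
              * (2 / (Real.pi * (1 + φ ^ 2)))) * β ^ 2)
        atTop (𝓝 C) ∧
      Tendsto
        (fun β : ℝ =>
          (∫ φ in Set.Ioi (0 : ℝ),
            (1 / (φ * Real.sqrt (2 * Real.pi))) * Real.exp (-β ^ 2 / (2 * φ ^ 2))
              * (2 / (Real.pi * (1 + φ ^ 2)))) * β ^ 2)
        atBot (𝓝 C) ∧
      ∀ s > (0 : ℝ),
        Tendsto
          (fun β : ℝ =>
            Real.exp (-β ^ 2 / (2 * s)) /
              ∫ φ in Set.Ioi (0 : ℝ),
                (1 / (φ * Real.sqrt (2 * Real.pi))) * Real.exp (-β ^ 2 / (2 * φ ^ 2))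
                  * (2 / (Real.pi * (1 + φ ^ 2))))
          atTop (𝓝 0) := by
  set C := ∫ ψ in Set.Ioi (0:ℝ), hsG ψ with hC
  have hTop : Tendsto (fun β : ℝ => hsF β * β ^ 2) atTop (𝓝 C) := by
    refine lemB.congr' ?_
    filter_upwards [eventually_gt_atTop (0:ℝ)] with b hb using (lemA hb).symm
  have hEven : (fun β : ℝ => hsF (-β) * (-β) ^ 2) = fun β : ℝ => hsF β * β ^ 2 := by
    funext β
    have : hsF (-β) = hsF β := by unfold hsF; simp only [neg_sq]
    rw [this, neg_sq]
  have hBot : Tendsto (fun β : ℝ => hsF β * β ^ 2) atBot (𝓝 C) := by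
    have h := hTop.comp tendsto_neg_atBot_atTop
    have h2 : (fun β : ℝ => hsF β * β ^ 2) ∘ Neg.neg = fun β : ℝ => hsF (-β) * (-β) ^ 2 := rfl
    rw [h2, hEven] at h
    exact h
  refine ⟨C, hsC_pos, hTop, hBot, fun s hs => ?_⟩
  have key : Tendsto (fun β : ℝ => Real.exp (-β ^ 2 / (2 * s)) * β ^ 2) atTop (𝓝 0) := by
    have h1 : Tendsto (fun β : ℝ => β ^ 2 / (2 * s)) atTop atTop :=
      (tendsto_pow_atTop two_ne_zero).atTop_div_const (by positivity)
    have h2 := (Real.tendsto_pow_mul_exp_neg_atTop_nhds_zero 1).comp h1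
    have h3 := h2.const_mul (2 * s)
    rw [mul_zero] at h3
    refine h3.congr' (Eventually.of_forall fun β => ?_)
    simp only [Function.comp, pow_one, neg_div]
    field_simp
  have final := key.mul (hTop.inv₀ (ne_of_gt hsC_pos))
  rw [zero_mul] at final
  refine final.congr' ?_
  filter_upwards [eventually_gt_atTop (0:ℝ)] with β hβ
  have hb2 : (β ^ 2)⁻¹ * β ^ 2 = 1 := inv_mul_cancel₀ (by positivity)
  show Real.exp (-β ^ 2 / (2 * s)) * β ^ 2 * (hsF β * β ^ 2)⁻¹
      = Real.exp (-β ^ 2 / (2 * s)) / hsF β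
  rw [mul_inv, div_eq_mul_inv]
  calc Real.exp (-β ^ 2 / (2 * s)) * β ^ 2 * ((hsF β)⁻¹ * (β ^ 2)⁻¹)
      = Real.exp (-β ^ 2 / (2 * s)) * (hsF β)⁻¹ * ((β ^ 2)⁻¹ * β ^ 2) := by ring
    _ = Real.exp (-β ^ 2 / (2 * s)) * (hsF β)⁻¹ := by rw [hb2, mul_one]
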